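/- arXiv:1906.01714 — 9 statements merged into one kernel-verified Lean document; each statement's English description precedes it below -/
import Mathlib

section
/- Let $\xi : \mathbb{R}^{a \times b} \to \mathbb{R}_{\geq 0}$ be continuous, positive definite (i.e., $\xi(0) = 0$ and $\xi(Z) > 0$ for $Z \neq 0$), and generalized homogeneous with $\mathcal{K}_\infty$ gauge $q$ (i.e., $\xi(Z) \geq q(1/|\lambda|)\,\xi(\lambda Z)$ for all real $\lambda \neq 0$ and all $Z$). Then for any norm $\|\cdot\|$ on $\mathbb{R}^{a \times b}$, setting $D = \min_{\|Z\| = 1} \xi(Z)$, we have $D > 0$ and $\xi(Z) \geq D\, q(\|Z\|)$ for all $Z \in \mathbb{R}^{a \times b}$. -/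
def IsKInf (q : ℝ → ℝ) : Prop :=
  ContinuousOn q (Set.Ici 0) ∧ q 0 = 0 ∧ StrictMonoOn q (Set.Ici 0) ∧
    Filter.Tendsto q Filter.atTop Filter.atTop

theorem loss_lower_bound (a b : ℕ) (ha : 0 < a) (hb : 0 < b)
    (ξ : Matrix (Fin a) (Fin b) ℝ → ℝ)
    (N : Matrix (Fin a) (Fin b) ℝ → ℝ)
    (hN0 : ∀ Z, N Z = 0 ↔ Z = 0)
    (hNsmul : ∀ (c : ℝ) (Z), N (c • Z) = |c| * N Z)
    (hNtri : ∀ Z1 Z2, N (Z1 + Z2) ≤ N Z1 + N Z2)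
    (hξ0 : ξ 0 = 0) (hξpos : ∀ Z, Z ≠ 0 → 0 < ξ Z)
    (hξcont : Continuous ξ)
    (q : ℝ → ℝ) (hq : IsKInf q)
    (hGH : ∀ lam : ℝ, lam ≠ 0 → ∀ Z, ξ Z ≥ q (1 / |lam|) * ξ (lam • Z)) :
    0 < sInf (ξ '' {Z | N Z = 1}) ∧
      ∀ Z, ξ Z ≥ sInf (ξ '' {Z | N Z = 1}) * q (N Z) := by
  classical
  letI : NormedAddCommGroup (Matrix (Fin a) (Fin b) ℝ) := Matrix.normedAddCommGroup
  letI : NormedSpace ℝ (Matrix (Fin a) (Fin b) ℝ) := Matrix.normedSpace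
  obtain ⟨hqc, hq0, hqmono, hqtop⟩ := hq
  have hN0' : N 0 = 0 := (hN0 0).mpr rfl
  have hNneg : ∀ Z : Matrix (Fin a) (Fin b) ℝ, N (-Z) = N Z := by
    intro Z
    have := hNsmul (-1) Z
    simpa using this
  have hNnonneg : ∀ Z : Matrix (Fin a) (Fin b) ℝ, 0 ≤ N Z := by
    intro Z
    have h1 := hNtri Z (-Z)
    rw [add_neg_cancel, hN0', hNneg] at h1
    linarith
  -- sum bound
  have hNsum : ∀ (s : Finset (Fin a × Fin b)) (f : Fin a × Fin b → Matrix (Fin a) (Fin b) ℝ),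
      N (∑ p ∈ s, f p) ≤ ∑ p ∈ s, N (f p) := by
    intro s f
    induction s using Finset.induction with
    | empty => simp [hN0']
    | insert x s' hx ih =>
      rw [Finset.sum_insert hx, Finset.sum_insert hx]
      exact le_trans (hNtri _ _) (by linarith)
  set C : ℝ := ∑ p : Fin a × Fin b, N (Matrix.single p.1 p.2 1) with hC
  have hC0 : 0 ≤ C := Finset.sum_nonneg fun p _ => hNnonneg _
  have key : ∀ Z : Matrix (Fin a) (Fin b) ℝ, N Z ≤ C * ‖Z‖ := by
    intro Z
    have hrep : Z = ∑ p : Fin a × Fin b,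
        (Z p.1 p.2) • Matrix.single p.1 p.2 (1 : ℝ) := by
      conv_lhs => rw [Matrix.matrix_eq_sum_single Z]
      rw [← Finset.sum_product']
      refine Finset.sum_congr rfl fun p _ => ?_
      rw [Matrix.smul_single]
      simp
    calc N Z ≤ ∑ p : Fin a × Fin b, N ((Z p.1 p.2) • Matrix.single p.1 p.2 (1 : ℝ)) := by
          conv_lhs => rw [hrep]
          exact hNsum _ _
      _ ≤ ∑ p : Fin a × Fin b, ‖Z‖ * N (Matrix.single p.1 p.2 (1 : ℝ)) := by
          refine Finset.sum_le_sum fun p _ => ?_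
          rw [hNsmul]
          refine mul_le_mul_of_nonneg_right ?_ (hNnonneg _)
          exact Matrix.norm_entry_le_entrywise_sup_norm Z
      _ = C * ‖Z‖ := by rw [← Finset.mul_sum, mul_comm]
  have hNlip : ∀ X Y : Matrix (Fin a) (Fin b) ℝ, |N X - N Y| ≤ C * ‖X - Y‖ := by
    intro X Y
    have h1 : N X ≤ N Y + N (X - Y) := by
      have := hNtri Y (X - Y); simpa using this
    have h2 : N Y ≤ N X + N (Y - X) := by
      have := hNtri X (Y - X); simpa using this
    have h3 : N (X - Y) ≤ C * ‖X - Y‖ := key _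
    have h4 : N (Y - X) ≤ C * ‖X - Y‖ :=
      calc N (Y - X) = N (X - Y) := by rw [← neg_sub X Y, hNneg]
        _ ≤ C * ‖X - Y‖ := key _
    rw [abs_sub_le_iff]
    constructor <;> linarith
  have hNcont : Continuous N := by
    refine Metric.continuous_iff.mpr ?_
    intro x ε hε
    by_cases hCpos : 0 < C
    · refine ⟨ε / C, by positivity, fun y hy => ?_⟩
      rw [Real.dist_eq]
      calc |N y - N x| ≤ C * ‖y - x‖ := hNlip y x
        _ < C * (ε / C) := by
            refine mul_lt_mul_of_pos_left ?_ hCpos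
            rwa [dist_eq_norm] at hy
        _ = ε := by field_simp
    · refine ⟨1, one_pos, fun y _ => ?_⟩
      have hCz : C = 0 := le_antisymm (not_lt.mp hCpos) hC0
      have := hNlip y x
      rw [hCz, zero_mul] at this
      rw [Real.dist_eq]
      have : |N y - N x| = 0 := le_antisymm this (abs_nonneg _)
      rw [this]; exact hε
  -- a nonzero matrix
  set i0 : Fin a := ⟨0, ha⟩
  set j0 : Fin b := ⟨0, hb⟩
  have hZ0ne : (Matrix.single i0 j0 (1 : ℝ)) ≠ 0 := by
    intro h
    have := congrFun (congrFun h i0) j0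
    simp [Matrix.single_apply_same] at this
  haveI : Nontrivial (Matrix (Fin a) (Fin b) ℝ) := ⟨⟨Matrix.single i0 j0 (1 : ℝ), 0, hZ0ne⟩⟩
  -- minimum of N on the unit sphere of ‖·‖
  have hsphc : IsCompact (Metric.sphere (0 : Matrix (Fin a) (Fin b) ℝ) 1) := isCompact_sphere 0 1
  have hsphne : (Metric.sphere (0 : Matrix (Fin a) (Fin b) ℝ) 1).Nonempty :=
    NormedSpace.sphere_nonempty.mpr zero_le_one
  obtain ⟨u, hu, humin⟩ := hsphc.exists_isMinOn hsphne hNcont.continuousOn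
  have hune : u ≠ 0 := by
    intro h
    rw [h] at hu
    simp at hu
  have hcpos : 0 < N u := lt_of_le_of_ne (hNnonneg u)
    (fun h => hune ((hN0 u).mp h.symm))
  -- the N-sphere S is compact
  set S : Set (Matrix (Fin a) (Fin b) ℝ) := {Z | N Z = 1} with hS
  have hSsub : S ⊆ Metric.closedBall (0 : Matrix (Fin a) (Fin b) ℝ) (1 / N u) := by
    intro Z hZ
    have hZne : Z ≠ 0 := by
      intro h
      rw [h] at hZ
      simp only [hS, Set.mem_setOf_eq, hN0'] at hZ
      linarith
    have hZnorm : 0 < ‖Z‖ := norm_pos_iff.mpr hZne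
    have hmem : (‖Z‖⁻¹ • Z) ∈ Metric.sphere (0 : Matrix (Fin a) (Fin b) ℝ) 1 := by
      simp [norm_smul, abs_of_pos (inv_pos.mpr hZnorm), inv_mul_cancel₀ (ne_of_gt hZnorm)]
    have hle : N u ≤ N (‖Z‖⁻¹ • Z) := humin hmem
    rw [hNsmul, abs_of_pos (inv_pos.mpr hZnorm)] at hle
    have hNZ : N Z = 1 := hZ
    rw [hNZ, mul_one] at hle
    rw [Metric.mem_closedBall, dist_zero_right]
    rw [le_div_iff₀ hcpos]
    calc ‖Z‖ * N u ≤ ‖Z‖ * ‖Z‖⁻¹ := by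
          exact mul_le_mul_of_nonneg_left hle (le_of_lt hZnorm)
      _ = 1 := mul_inv_cancel₀ (ne_of_gt hZnorm)
  have hSclosed : IsClosed S := isClosed_eq hNcont continuous_const
  have hScompact : IsCompact S :=
    (isCompact_closedBall (0 : Matrix (Fin a) (Fin b) ℝ) (1 / N u)).of_isClosed_subset hSclosed hSsub
  have hSne : S.Nonempty := by
    set Z0 : Matrix (Fin a) (Fin b) ℝ := Matrix.single i0 j0 (1 : ℝ)
    have hNZ0 : 0 < N Z0 := lt_of_le_of_ne (hNnonneg Z0)
      (fun h => hZ0ne ((hN0 Z0).mp h.symm))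
    refine ⟨(N Z0)⁻¹ • Z0, ?_⟩
    simp only [hS, Set.mem_setOf_eq, hNsmul, abs_of_pos (inv_pos.mpr hNZ0)]
    exact inv_mul_cancel₀ (ne_of_gt hNZ0)
  have himgc : IsCompact (ξ '' S) := hScompact.image hξcont
  have himgne : (ξ '' S).Nonempty := hSne.image ξ
  have hbdd : BddBelow (ξ '' S) := himgc.bddBelow
  set D : ℝ := sInf (ξ '' S) with hD
  have hDmem : D ∈ ξ '' S := himgc.sInf_mem himgne
  obtain ⟨W, hWS, hWD⟩ := hDmem
  have hWne : W ≠ 0 := by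
    intro h
    rw [h] at hWS
    simp only [hS, Set.mem_setOf_eq, hN0'] at hWS
    linarith
  have hDpos : 0 < D := hWD ▸ hξpos W hWne
  refine ⟨hDpos, fun Z => ?_⟩
  by_cases hZ : Z = 0
  · rw [hZ, hξ0, hN0', hq0, mul_zero]
  · have hNZpos : 0 < N Z := lt_of_le_of_ne (hNnonneg Z)
      (fun h => hZ ((hN0 Z).mp h.symm))
    set t : ℝ := N Z with ht
    have hlam : (t⁻¹ : ℝ) ≠ 0 := inv_ne_zero (ne_of_gt hNZpos)
    have hGH' := hGH t⁻¹ hlam Z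
    have habs : 1 / |t⁻¹| = t := by
      rw [abs_of_pos (inv_pos.mpr hNZpos), one_div, inv_inv]
    rw [habs] at hGH'
    have hmem : (t⁻¹ • Z) ∈ S := by
      simp only [hS, Set.mem_setOf_eq, hNsmul, abs_of_pos (inv_pos.mpr hNZpos)]
      exact inv_mul_cancel₀ (ne_of_gt hNZpos)
    have hDle : D ≤ ξ (t⁻¹ • Z) := csInf_le hbdd ⟨_, hmem, rfl⟩
    have hqt : 0 ≤ q t := by
      have := hqmono (Set.self_mem_Ici) (Set.mem_Ici.mpr (le_of_lt hNZpos)) hNZpos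
      linarith [hq0 ▸ this]
    nlinarith [hGH', hDle, hqt]
end

section
/- If $\xi : \mathbb{R}^{a \times b} \to \mathbb{R}_{\geq 0}$ is convex and satisfies the generalized homogeneity property $\xi(Z) \geq q(1/|\lambda|)\,\xi(\lambda Z)$ for all $\lambda \neq 0$ and all $Z$, where $q$ is a $\mathcal{K}_\infty$ function, then $\xi$ satisfies the generalized triangle inequality $\xi(Z_1 - Z_2) \geq \gamma\,\xi(Z_1) - \xi(Z_2)$ for all $Z_1, Z_2$ with constant $\gamma = 2q(1/2)$. -/
theorem convex_GH_implies_GTI (a b : ℕ) (ξ : Matrix (Fin a) (Fin b) ℝ → ℝ)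
    (hconv : ConvexOn ℝ Set.univ ξ)
    (q : ℝ → ℝ) (hq : IsKInf q)
    (hGH : ∀ lam : ℝ, lam ≠ 0 → ∀ Z, ξ Z ≥ q (1 / |lam|) * ξ (lam • Z)) :
    ∀ Z1 Z2, ξ (Z1 - Z2) ≥ 2 * q (1 / 2) * ξ Z1 - ξ Z2 := by
  intro Z1 Z2
  have h1 := hGH 2 (by norm_num) ((1/2 : ℝ) • Z1)
  rw [smul_smul] at h1
  norm_num at h1
  have h2 := hconv.2 (Set.mem_univ (Z1 - Z2)) (Set.mem_univ Z2)
    (by norm_num : (0:ℝ) ≤ 1/2) (by norm_num : (0:ℝ) ≤ 1/2) (by norm_num)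
  have heq : (1/2 : ℝ) • (Z1 - Z2) + (1/2 : ℝ) • Z2 = (1/2 : ℝ) • Z1 := by
    rw [smul_sub]; abel
  rw [heq] at h2
  simp only [smul_eq_mul] at h2
  linarith
end

section
/- Let $\ell : \mathbb{R}^{n_y} \to \mathbb{R}_{\geq 0}$ satisfy: $\ell(0) = 0$, $\ell(y) > 0$ for $y \neq 0$, continuity, symmetry $\ell(-y) = \ell(y)$, and the generalized triangle inequality $\ell(a - b) \geq \gamma_\ell\,\ell(a) - \ell(b)$ with constant $\gamma_\ell \in (0, 1]$. Then the function $\psi(y) = 1 - e^{-\ell(y)}$ also satisfies positive definiteness, continuity, symmetry, and the generalized triangle inequality with the same constant $\gamma_\ell$. -/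
lemma psi_conc (γ A : ℝ) (hγ0 : 0 ≤ γ) (hγ1 : γ ≤ 1) :
    Real.exp (-(γ * A)) ≤ 1 - γ + γ * Real.exp (-A) := by
  have h := Real.geom_mean_le_arith_mean2_weighted hγ0 (by linarith : (0:ℝ) ≤ 1 - γ)
    (Real.exp_pos (-A)).le zero_le_one (by ring)
  have he : Real.exp (-A) ^ γ = Real.exp (-(γ * A)) := by
    rw [← Real.exp_mul]; ring_nf
  rw [he, Real.one_rpow, mul_one] at h
  linarith

theorem exp_loss_properties (ny : ℕ) (ℓ : (Fin ny → ℝ) → ℝ)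
    (h0 : ℓ 0 = 0) (hpos : ∀ y, y ≠ 0 → 0 < ℓ y)
    (hcont : Continuous ℓ) (hsym : ∀ y, ℓ (-y) = ℓ y)
    (γ : ℝ) (hγ0 : 0 < γ) (hγ1 : γ ≤ 1)
    (hGTI : ∀ a b, ℓ (a - b) ≥ γ * ℓ a - ℓ b) :
    (1 - Real.exp (-ℓ 0) = 0) ∧ (∀ y, y ≠ 0 → 0 < 1 - Real.exp (-ℓ y)) ∧
      Continuous (fun y => 1 - Real.exp (-ℓ y)) ∧
      (∀ y, 1 - Real.exp (-ℓ (-y)) = 1 - Real.exp (-ℓ y)) ∧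
      (∀ a b, 1 - Real.exp (-ℓ (a - b)) ≥
        γ * (1 - Real.exp (-ℓ a)) - (1 - Real.exp (-ℓ b))) := by
  have hnn : ∀ y, 0 ≤ ℓ y := by
    intro y
    by_cases hy : y = 0
    · simp [hy, h0]
    · exact (hpos y hy).le
  refine ⟨by simp [h0], ?_, ?_, fun y => by rw [hsym], ?_⟩
  · intro y hy
    have h1 : Real.exp (-ℓ y) < Real.exp 0 := Real.exp_lt_exp.2 (by linarith [hpos y hy])
    simp only [Real.exp_zero] at h1; linarith
  · exact continuous_const.sub (hcont.neg.rexp)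
  · intro a b
    set A := ℓ a with hA
    set B := ℓ b with hB
    set C := ℓ (a - b) with hC
    have hAn := hnn a; have hBn := hnn b; have hCn := hnn (a - b)
    have hCge : C ≥ γ * A - B := hGTI a b
    have hconc := psi_conc γ A hγ0.le hγ1
    rcases le_or_gt (γ * A) B with h | h
    · -- γψ(A) ≤ ψ(γA) ≤ ψ(B), so LHS ≤ 0
      have h1 : Real.exp (-B) ≤ Real.exp (-(γ * A)) := Real.exp_le_exp.2 (by linarith)
      have h2 : Real.exp (-C) ≤ 1 := by
        rw [← Real.exp_zero]; exact Real.exp_le_exp.2 (by linarith)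
      linarith
    · have h1 : Real.exp (-C) ≤ Real.exp (-(γ * A - B)) := Real.exp_le_exp.2 (by linarith)
      have h2 : Real.exp (-(γ * A - B)) = Real.exp (-(γ * A)) * Real.exp B := by
        rw [← Real.exp_add]; ring_nf
      have hu : Real.exp (-B) ≤ 1 := by
        rw [← Real.exp_zero]; exact Real.exp_le_exp.2 (by linarith)
      have hv : Real.exp (-(γ * A)) ≤ Real.exp (-B) := Real.exp_le_exp.2 (by linarith)
      have hup : 0 < Real.exp (-B) := Real.exp_pos _
      -- (u - v)(1 - u) ≥ 0 with u = exp(-B), v = exp(-γA); exp B = 1/u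
      have hBinv : Real.exp B * Real.exp (-B) = 1 := by
        rw [← Real.exp_add]; simp
      nlinarith [mul_nonneg (sub_nonneg.2 hv) (sub_nonneg.2 hu),
        mul_pos (Real.exp_pos B) hup]
end

section
/- Let $\ell : \mathbb{R}^{n_y} \to \mathbb{R}_{\geq 0}$ be continuous, positive definite, and exactly generalized-homogeneous in the sense that $\ell(y/\lambda) = q(1/\lambda)\,\ell(y)$ for all $\lambda > 0$ and all $y$, where $q$ is a $\mathcal{K}_\infty$ function. Define for $\lambda > 0$: $q^\star(\lambda) = \inf_{y \neq 0} \frac{1 - e^{-\ell(y)}}{1 - e^{-\ell(y/\lambda)}}$. Then $q^\star(\lambda) = 1/q(1/\lambda)$ for $0 < \lambda \leq 1$ and $q^\star(\lambda) = 1$ for $\lambda > 1$; in particular $1 - e^{-\ell(y)} \geq q^\star(1/\lambda)\,(1 - e^{-\ell(\lambda y)})$ for all $\lambda > 0$ and all $y$. -/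
open Real Filter Set

lemma bern_aux {c t : ℝ} (hc : 1 ≤ c) (ht : 0 ≤ t) :
    1 - Real.exp (-(c * t)) ≤ c * (1 - Real.exp (-t)) := by
  have ha : (0:ℝ) < Real.exp (-t) := Real.exp_pos _
  have ha1 : Real.exp (-t) ≤ 1 := Real.exp_le_one_iff.mpr (by linarith)
  have hb : 1 + c * (Real.exp (-t) - 1) ≤ (1 + (Real.exp (-t) - 1)) ^ c :=
    one_add_mul_self_le_rpow_one_add (by linarith) hc
  have he : (1 + (Real.exp (-t) - 1)) ^ c = Real.exp (-(c * t)) := by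
    rw [show 1 + (Real.exp (-t) - 1) = Real.exp (-t) by ring, ← Real.exp_mul]
    ring_nf
  rw [he] at hb
  linarith

lemma tendsto_ratio_zero {c : ℝ} (hc : 0 < c) :
    Tendsto (fun t => (1 - Real.exp (-t)) / (1 - Real.exp (-(c * t))))
      (nhdsWithin 0 (Set.Ioi 0)) (nhds (1 / c)) := by
  have h1 : HasDerivAt (fun t : ℝ => 1 - Real.exp (-t)) 1 0 := by
    have e1 : HasDerivAt (fun t : ℝ => Real.exp (-t)) (-1) 0 := by
      simpa using ((hasDerivAt_id (0:ℝ)).neg).exp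
    have e : HasDerivAt (fun t : ℝ => 1 - Real.exp (-t)) (0 - -1) 0 :=
      (hasDerivAt_const (0:ℝ) (1:ℝ)).sub e1
    simpa using e
  have h2 : HasDerivAt (fun t : ℝ => 1 - Real.exp (-(c * t))) c 0 := by
    have e2 : HasDerivAt (fun t : ℝ => Real.exp (-(c * t))) (-c) 0 := by
      simpa using (((hasDerivAt_id (0:ℝ)).const_mul c).neg).exp
    have e : HasDerivAt (fun t : ℝ => 1 - Real.exp (-(c * t))) (0 - -c) 0 :=
      (hasDerivAt_const (0:ℝ) (1:ℝ)).sub e2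
    simpa using e
  have s1 := hasDerivAt_iff_tendsto_slope.mp h1
  have s2 := hasDerivAt_iff_tendsto_slope.mp h2
  have hmono : nhdsWithin (0:ℝ) (Set.Ioi 0) ≤ nhdsWithin 0 {(0:ℝ)}ᶜ :=
    nhdsWithin_mono 0 (fun x hx => ne_of_gt hx)
  have hdiv := (s1.mono_left hmono).div (s2.mono_left hmono) (ne_of_gt hc)
  refine hdiv.congr' ?_
  filter_upwards [self_mem_nhdsWithin] with t ht
  have ht0 : t ≠ 0 := ne_of_gt ht
  simp only [Pi.div_apply, slope_fun_def_field, mul_zero, neg_zero, Real.exp_zero,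
    sub_self, sub_zero]
  rw [div_div_div_cancel_right₀ ht0]

lemma tendsto_ratio_top {c : ℝ} (hc : 0 < c) :
    Tendsto (fun t => (1 - Real.exp (-t)) / (1 - Real.exp (-(c * t)))) atTop (nhds 1) := by
  have hn : Tendsto (fun t : ℝ => 1 - Real.exp (-t)) atTop (nhds 1) := by
    have := Real.tendsto_exp_atBot.comp tendsto_neg_atTop_atBot
    simpa using tendsto_const_nhds.sub this
  have hd : Tendsto (fun t : ℝ => 1 - Real.exp (-(c * t))) atTop (nhds 1) := by
    have hct : Tendsto (fun t : ℝ => -(c * t)) atTop atBot := by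
      have h := (tendsto_const_mul_atTop_of_pos hc).mpr (tendsto_id (α := ℝ))
      exact tendsto_neg_atTop_atBot.comp h
    have := Real.tendsto_exp_atBot.comp hct
    simpa using tendsto_const_nhds.sub this
  have e : Tendsto (fun t => (1 - Real.exp (-t)) / (1 - Real.exp (-(c * t)))) atTop (nhds (1 / 1)) :=
    hn.div hd one_ne_zero
  simpa using e

lemma sInf_eq_of_tendsto {f : ℝ → ℝ} {s : Set ℝ} {l : Filter ℝ} [l.NeBot] {L : ℝ}
    (hlb : ∀ x ∈ s, L ≤ f x) (hl : ∀ᶠ x in l, x ∈ s)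
    (ht : Tendsto f l (nhds L)) : sInf (f '' s) = L := by
  have hne : (f '' s).Nonempty := by
    obtain ⟨x, hx⟩ := hl.exists
    exact ⟨f x, x, hx, rfl⟩
  have hbdd : BddBelow (f '' s) := ⟨L, by rintro _ ⟨x, hx, rfl⟩; exact hlb x hx⟩
  refine le_antisymm (le_of_forall_pos_le_add fun ε hε => ?_)
    (le_csInf hne (by rintro _ ⟨x, hx, rfl⟩; exact hlb x hx))
  have hev : ∀ᶠ x in l, f x < L + ε := ht.eventually_lt_const (by linarith)
  obtain ⟨x, hx1, hx2⟩ := (hev.and hl).exists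
  exact le_trans (csInf_le hbdd ⟨x, hx2, rfl⟩) hx1.le

lemma denom_pos {c t : ℝ} (hc : 0 < c) (ht : 0 < t) :
    0 < 1 - Real.exp (-(c * t)) := by
  have : Real.exp (-(c * t)) < 1 := Real.exp_lt_one_iff.mpr (by nlinarith)
  linarith

lemma aux_inf_ge {c : ℝ} (hc : 1 ≤ c) :
    sInf ((fun t => (1 - Real.exp (-t)) / (1 - Real.exp (-(c * t)))) '' Set.Ioi 0) = 1 / c := by
  have hc0 : 0 < c := by linarith
  haveI : (nhdsWithin (0:ℝ) (Set.Ioi 0)).NeBot := nhdsGT_neBot 0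
  refine sInf_eq_of_tendsto (s := Set.Ioi 0) (l := nhdsWithin 0 (Set.Ioi 0))
    (fun t ht => ?_) eventually_mem_nhdsWithin (tendsto_ratio_zero hc0)
  have ht : (0:ℝ) < t := ht
  have hden := denom_pos hc0 ht
  rw [div_le_div_iff₀ hc0 hden]
  have := bern_aux hc ht.le
  nlinarith

lemma aux_inf_le {c : ℝ} (hc0 : 0 < c) (hc : c ≤ 1) :
    sInf ((fun t => (1 - Real.exp (-t)) / (1 - Real.exp (-(c * t)))) '' Set.Ioi 0) = 1 := by
  refine sInf_eq_of_tendsto (s := Set.Ioi 0) (fun t ht => ?_) (eventually_gt_atTop 0)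
    (tendsto_ratio_top hc0)
  have ht : (0:ℝ) < t := ht
  have hden := denom_pos hc0 ht
  rw [le_div_iff₀ hden, one_mul]
  have : Real.exp (-t) ≤ Real.exp (-(c * t)) := Real.exp_le_exp.mpr (by nlinarith)
  linarith

theorem qstar_properties (ny : ℕ) (hny : 0 < ny) (ℓ : (Fin ny → ℝ) → ℝ)
    (hcont : Continuous ℓ) (h0 : ℓ 0 = 0) (hpos : ∀ y, y ≠ 0 → 0 < ℓ y)
    (q : ℝ → ℝ) (hq : IsKInf q)
    (hGH : ∀ lam : ℝ, 0 < lam → ∀ y, ℓ (lam⁻¹ • y) = q (1 / lam) * ℓ y)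
    (qstar : ℝ → ℝ)
    (hqstar : ∀ lam : ℝ, 0 < lam → qstar lam =
      sInf ((fun y => (1 - Real.exp (-ℓ y)) / (1 - Real.exp (-ℓ (lam⁻¹ • y)))) ''
        {y : Fin ny → ℝ | y ≠ 0})) :
    (∀ lam : ℝ, 0 < lam → lam ≤ 1 → qstar lam = 1 / q (1 / lam)) ∧
      (∀ lam : ℝ, 1 < lam → qstar lam = 1) ∧
      (∀ lam : ℝ, 0 < lam → ∀ y,
        1 - Real.exp (-ℓ y) ≥ qstar (1 / lam) * (1 - Real.exp (-ℓ (lam • y)))) := by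
  obtain ⟨hqc, hq0, hqm, hqt⟩ := hq
  have hqmono : MonotoneOn q (Set.Ici 0) := hqm.monotoneOn
  set y₀ : Fin ny → ℝ := fun _ => 1 with hy₀def
  have hy₀ : y₀ ≠ 0 := by
    intro h
    have := congrFun h ⟨0, hny⟩
    simp [hy₀def] at this
  have hv₀ : 0 < ℓ y₀ := hpos _ hy₀
  have hq1 : q 1 = 1 := by
    have h := hGH 1 one_pos y₀
    simp at h
    nlinarith
  have hqpos : ∀ x : ℝ, 0 < x → 0 < q x := fun x hx =>
    hq0 ▸ hqm (Set.mem_Ici.mpr (le_refl 0)) (Set.mem_Ici.mpr hx.le) hx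
  -- surjectivity of ℓ onto (0, ∞)
  have hsurj : ∀ v : ℝ, 0 < v → ∃ y : Fin ny → ℝ, y ≠ 0 ∧ ℓ y = v := by
    intro v hv
    obtain ⟨M, hM1, hM2⟩ :=
      ((hqt.eventually_ge_atTop (v / ℓ y₀)).and (eventually_ge_atTop (0:ℝ))).exists
    have hIcc : Set.Icc (q 0) (q M) ⊆ q '' Set.Icc 0 M :=
      intermediate_value_Icc hM2 (hqc.mono (Set.Icc_subset_Ici_self))
    have hmem : v / ℓ y₀ ∈ Set.Icc (q 0) (q M) :=
      ⟨by rw [hq0]; positivity, hM1⟩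
    obtain ⟨s, hs, hsv⟩ := hIcc hmem
    have hs0 : 0 < s := by
      rcases hs.1.lt_or_eq with h | h
      · exact h
      · exfalso
        rw [← h, hq0] at hsv
        have : 0 < v / ℓ y₀ := div_pos hv hv₀
        linarith
    refine ⟨s • y₀, smul_ne_zero (ne_of_gt hs0) hy₀, ?_⟩
    have h := hGH s⁻¹ (inv_pos.mpr hs0) y₀
    rw [inv_inv, one_div, inv_inv] at h
    rw [h, hsv, div_mul_cancel₀ _ (ne_of_gt hv₀)]
  -- image set rewriting
  have hset : ∀ lam : ℝ, 0 < lam →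
      ((fun y => (1 - Real.exp (-ℓ y)) / (1 - Real.exp (-ℓ (lam⁻¹ • y)))) ''
        {y : Fin ny → ℝ | y ≠ 0}) =
      (fun t => (1 - Real.exp (-t)) / (1 - Real.exp (-(q (1 / lam) * t)))) '' Set.Ioi 0 := by
    intro lam hlam
    ext r
    constructor
    · rintro ⟨y, hy, rfl⟩
      exact ⟨ℓ y, hpos y hy, by dsimp only; rw [hGH lam hlam y]⟩
    · rintro ⟨t, ht, rfl⟩
      obtain ⟨y, hy, rfl⟩ := hsurj t ht
      exact ⟨y, hy, by dsimp only; rw [hGH lam hlam y]⟩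
  have P1 : ∀ lam : ℝ, 0 < lam → lam ≤ 1 → qstar lam = 1 / q (1 / lam) := by
    intro lam hlam hlam1
    have h1 : 1 ≤ 1 / lam := one_le_one_div hlam hlam1
    have hc : 1 ≤ q (1 / lam) := by
      have h := hqmono (Set.mem_Ici.mpr zero_le_one) (Set.mem_Ici.mpr (by positivity)) h1
      rw [hq1] at h; exact h
    rw [hqstar lam hlam, hset lam hlam, aux_inf_ge hc]
  have P2 : ∀ lam : ℝ, 1 < lam → qstar lam = 1 := by
    intro lam hlam
    have hlam0 : 0 < lam := by linarith
    have h1 : 0 < 1 / lam := by positivity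
    have h2 : 1 / lam ≤ 1 := by rw [div_le_one hlam0]; linarith
    have hc0 : 0 < q (1 / lam) := hqpos _ h1
    have hc : q (1 / lam) ≤ 1 := by
      have h := hqmono (Set.mem_Ici.mpr h1.le) (Set.mem_Ici.mpr zero_le_one) h2
      rw [hq1] at h; exact h
    rw [hqstar lam hlam0, hset lam hlam0, aux_inf_le hc0 hc]
  refine ⟨P1, P2, ?_⟩
  intro lam hlam y
  have hl : ℓ (lam • y) = q lam * ℓ y := by
    have h := hGH (1 / lam) (by positivity) y
    rw [one_div, inv_inv, one_div, inv_inv] at h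
    exact h
  have hty : 0 ≤ ℓ y := by
    rcases eq_or_ne y 0 with h | h
    · rw [h, h0]
    · exact (hpos y h).le
  by_cases h1 : 1 ≤ lam
  · have hinv0 : 0 < 1 / lam := by positivity
    have hinv1 : 1 / lam ≤ 1 := by rw [div_le_one hlam]; linarith
    have hc : 1 ≤ q lam := by
      have h := hqmono (Set.mem_Ici.mpr zero_le_one) (Set.mem_Ici.mpr (by linarith)) h1
      rw [hq1] at h; exact h
    have hc0 : 0 < q lam := by linarith
    rw [P1 _ hinv0 hinv1, one_div_one_div, hl, ge_iff_le, one_div, inv_mul_le_iff₀ hc0]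
    exact bern_aux hc hty
  · push_neg at h1
    have hc0 : 0 < q lam := hqpos _ hlam
    have hc : q lam ≤ 1 := by
      have h := hqmono (Set.mem_Ici.mpr hlam.le) (Set.mem_Ici.mpr zero_le_one) h1.le
      rw [hq1] at h; exact h
    rw [P2 _ ((one_lt_div hlam).mpr h1), hl, one_mul, ge_iff_le]
    have : Real.exp (-ℓ y) ≤ Real.exp (-(q lam * ℓ y)) :=
      Real.exp_le_exp.mpr (by nlinarith)
    linarith
end

section
/- Consider the functional $V_\Sigma^\circ(Y, z) = \sum_{t=0}^{T-1} \psi_t(y_t - M_t z)$ where each $\psi_t : \mathbb{R}^{n_y} \to \mathbb{R}_{\geq 0}$ is positive definite, symmetric, and satisfies the triangle-type inequality $\psi_t(a - b) \geq \psi_t(a) - \psi_t(b)$, and where the stacked matrix of the $M_t$ has full column rank $n$. For a positive integer $r$, define the $r$-th concentration ratio $\nu_r(M) = \sup_{z \neq 0} \sup_{|\mathbb{I}| = r} \frac{\sum_{t \in \mathbb{I}} \psi_t(M_t z)}{\sum_{t \in \mathbb{T}} \psi_t(M_t z)}$ where $\mathbb{I}$ ranges over subsets of $\mathbb{T} = \{0,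 \dots, T-1\}$ of cardinality $r$. Then the following are equivalent: (i) for every $Y \in \mathbb{R}^{n_y \times T}$ and every $z_0 \in \mathbb{R}^n$ such that $|\{t : y_t \neq M_t z_0\}| \leq r$, $z_0$ is the unique minimizer of $V_\Sigma^\circ(Y, \cdot)$; (ii) $\nu_r(M) < 1/2$. -/
theorem exact_recoverability (T n ny : ℕ) (r : ℕ) (hr0 : 0 < r) (hrT : r ≤ T)
    (M : Fin T → Matrix (Fin ny) (Fin n) ℝ)
    (ψ : Fin T → (Fin ny → ℝ) → ℝ)
    (hψ0 : ∀ t, ψ t 0 = 0) (hψpos : ∀ t e, e ≠ 0 → 0 < ψ t e)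
    (hψsym : ∀ t e, ψ t (-e) = ψ t e)
    (hψGTI : ∀ t a b, ψ t (a - b) ≥ ψ t a - ψ t b)
    (hrank : ∀ z : Fin n → ℝ, (∀ t, (M t).mulVec z = 0) → z = 0) :
    (∀ (Y : Fin T → Fin ny → ℝ) (z0 : Fin n → ℝ),
        {t : Fin T | Y t ≠ (M t).mulVec z0}.ncard ≤ r →
        ∀ z : Fin n → ℝ, z ≠ z0 →
          ∑ t, ψ t (Y t - (M t).mulVec z0) < ∑ t, ψ t (Y t - (M t).mulVec z)) ↔
      (∀ z : Fin n → ℝ, z ≠ 0 → ∀ I : Finset (Fin T), I.card = r →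
        ∑ t ∈ I, ψ t ((M t).mulVec z) < (1 / 2) * ∑ t, ψ t ((M t).mulVec z)) := by
  have hψnn : ∀ t e, 0 ≤ ψ t e := by
    intro t e
    rcases eq_or_ne e 0 with h | h
    · simp [h, hψ0]
    · exact (hψpos t e h).le
  constructor
  · intro h z hz I hI
    set Y : Fin T → Fin ny → ℝ := fun t => if t ∈ I then (M t).mulVec z else 0 with hY
    have hsub : {t : Fin T | Y t ≠ (M t).mulVec 0} ⊆ (I : Set (Fin T)) := by
      intro t ht
      simp only [Set.mem_setOf_eq, hY, Matrix.mulVec_zero] at ht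
      by_contra htI
      exact ht (if_neg (by simpa using htI))
    have hcard : {t : Fin T | Y t ≠ (M t).mulVec 0}.ncard ≤ r := by
      calc {t : Fin T | Y t ≠ (M t).mulVec 0}.ncard
          ≤ (I : Set (Fin T)).ncard := Set.ncard_le_ncard hsub (Set.toFinite _)
        _ = r := by rw [Set.ncard_coe_finset, hI]
    have key := h Y 0 hcard z hz
    have hA : ∑ t, ψ t (Y t - (M t).mulVec 0) = ∑ t ∈ I, ψ t ((M t).mulVec z) := by
      rw [← Finset.sum_add_sum_compl I (fun t => ψ t (Y t - (M t).mulVec 0))]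
      have h1 : ∀ t ∈ I, ψ t (Y t - (M t).mulVec 0) = ψ t ((M t).mulVec z) := by
        intro t ht; simp [hY, ht, Matrix.mulVec_zero]
      have h2 : ∀ t ∈ Iᶜ, ψ t (Y t - (M t).mulVec 0) = 0 := by
        intro t ht
        simp only [Finset.mem_compl] at ht
        simp [hY, ht, Matrix.mulVec_zero, hψ0]
      rw [Finset.sum_congr rfl h1, Finset.sum_eq_zero h2, add_zero]
    have hB : ∑ t, ψ t (Y t - (M t).mulVec z) = ∑ t ∈ Iᶜ, ψ t ((M t).mulVec z) := by
      rw [← Finset.sum_add_sum_compl I (fun t => ψ t (Y t - (M t).mulVec z))]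
      have h1 : ∀ t ∈ I, ψ t (Y t - (M t).mulVec z) = 0 := by
        intro t ht; simp [hY, ht, hψ0]
      have h2 : ∀ t ∈ Iᶜ, ψ t (Y t - (M t).mulVec z) = ψ t ((M t).mulVec z) := by
        intro t ht
        simp only [Finset.mem_compl] at ht
        have : Y t - (M t).mulVec z = -((M t).mulVec z) := by simp [hY, ht]
        rw [this, hψsym]
      rw [Finset.sum_eq_zero h1, Finset.sum_congr rfl h2, zero_add]
    have htot : ∑ t, ψ t ((M t).mulVec z)
        = ∑ t ∈ I, ψ t ((M t).mulVec z) + ∑ t ∈ Iᶜ, ψ t ((M t).mulVec z) :=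
      (Finset.sum_add_sum_compl I _).symm
    rw [hA, hB] at key
    rw [htot]
    linarith
  · intro h Y z0 hcard z hzz0
    set d : Fin n → ℝ := z - z0 with hd
    have hdne : d ≠ 0 := sub_ne_zero.mpr hzz0
    set S : Finset (Fin T) := Finset.univ.filter (fun t => Y t ≠ (M t).mulVec z0) with hS
    have hScard : S.card ≤ r := by
      have hcoe : (S : Set (Fin T)) = {t : Fin T | Y t ≠ (M t).mulVec z0} := by
        ext t; simp [hS]
      have := Set.ncard_coe_finset S
      rw [hcoe] at this
      omega
    obtain ⟨I, hSI, hIcard⟩ :=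
      Finset.exists_superset_card_eq hScard (by simpa using hrT)
    have hkey := h d hdne I hIcard
    have hsum_SI : ∑ t ∈ S, ψ t ((M t).mulVec d) ≤ ∑ t ∈ I, ψ t ((M t).mulVec d) :=
      Finset.sum_le_sum_of_subset_of_nonneg hSI (fun t _ _ => hψnn t _)
    have hLHS : ∑ t, ψ t (Y t - (M t).mulVec z0)
        = ∑ t ∈ S, ψ t (Y t - (M t).mulVec z0) := by
      symm
      apply Finset.sum_subset (Finset.subset_univ S)
      intro t _ ht
      simp only [hS, Finset.mem_filter, Finset.mem_univ, true_and, not_not] at ht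
      simp [ht, hψ0]
    have hdiff : ∀ t, Y t - (M t).mulVec z
        = (Y t - (M t).mulVec z0) - (M t).mulVec d := by
      intro t
      rw [hd, Matrix.mulVec_sub]
      abel
    have hRHS : ∑ t, ψ t (Y t - (M t).mulVec z)
        ≥ ∑ t ∈ S, ψ t (Y t - (M t).mulVec z0)
          + ∑ t, ψ t ((M t).mulVec d) - 2 * ∑ t ∈ S, ψ t ((M t).mulVec d) := by
      have split1 : ∑ t, ψ t (Y t - (M t).mulVec z)
          = ∑ t ∈ S, ψ t (Y t - (M t).mulVec z)
            + ∑ t ∈ Sᶜ, ψ t (Y t - (M t).mulVec z) :=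
        (Finset.sum_add_sum_compl S _).symm
      have split2 : ∑ t, ψ t ((M t).mulVec d)
          = ∑ t ∈ S, ψ t ((M t).mulVec d) + ∑ t ∈ Sᶜ, ψ t ((M t).mulVec d) :=
        (Finset.sum_add_sum_compl S _).symm
      have hin : ∑ t ∈ S, ψ t (Y t - (M t).mulVec z)
          ≥ ∑ t ∈ S, (ψ t (Y t - (M t).mulVec z0) - ψ t ((M t).mulVec d)) := by
        apply Finset.sum_le_sum
        intro t _
        rw [hdiff t]
        exact hψGTI t _ _
      have hout : ∑ t ∈ Sᶜ, ψ t (Y t - (M t).mulVec z)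
          = ∑ t ∈ Sᶜ, ψ t ((M t).mulVec d) := by
        apply Finset.sum_congr rfl
        intro t ht
        simp only [Finset.mem_compl, hS, Finset.mem_filter, Finset.mem_univ, true_and,
          not_not] at ht
        rw [hdiff t, ht, sub_self, zero_sub, hψsym]
      rw [split1, hout]
      rw [Finset.sum_sub_distrib] at hin
      linarith
    rw [hLHS]
    linarith
end

section
/- Direction (ii) ⟹ (i) of the exact recoverability theorem: with $\{\psi_t\}$ positive definite, symmetric, satisfying $\psi_t(a - b) \geq \psi_t(a) - \psi_t(b)$, and $\nu_r(M) < 1/2$, if $Y$ and $z_0$ satisfy $|\{t \in \{0,\dots,T-1\} : y_t \neq M_t z_0\}| \leq r$, then $V_\Sigma^\circ(Y, z_0) < V_\Sigma^\circ(Y, z)$ for every $z \neq z_0$, where $V_\Sigma^\circ(Y, z) = \sum_{t=0}^{T-1} \psi_t(y_t - M_t z)$. -/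
theorem exact_recovery_sufficient (T n ny : ℕ) (r : ℕ) (hrT : r ≤ T)
    (M : Fin T → Matrix (Fin ny) (Fin n) ℝ)
    (ψ : Fin T → (Fin ny → ℝ) → ℝ)
    (hψ0 : ∀ t, ψ t 0 = 0) (hψpos : ∀ t e, e ≠ 0 → 0 < ψ t e)
    (hψsym : ∀ t e, ψ t (-e) = ψ t e)
    (hψGTI : ∀ t a b, ψ t (a - b) ≥ ψ t a - ψ t b)
    (hrank : ∀ z : Fin n → ℝ, (∀ t, (M t).mulVec z = 0) → z = 0)
    (hnu : ∀ z : Fin n → ℝ, z ≠ 0 → ∀ I : Finset (Fin T), I.card = r →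
      ∑ t ∈ I, ψ t ((M t).mulVec z) < (1 / 2) * ∑ t, ψ t ((M t).mulVec z))
    (Y : Fin T → Fin ny → ℝ) (z0 : Fin n → ℝ)
    (hY : {t : Fin T | Y t ≠ (M t).mulVec z0}.ncard ≤ r) :
    ∀ z : Fin n → ℝ, z ≠ z0 →
      ∑ t, ψ t (Y t - (M t).mulVec z0) < ∑ t, ψ t (Y t - (M t).mulVec z) := by
  classical
  intro z hz
  set e : Fin n → ℝ := z - z0 with he
  have he0 : e ≠ 0 := sub_ne_zero.mpr hz
  have hψnn : ∀ t x, 0 ≤ ψ t x := by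
    intro t x
    rcases eq_or_ne x 0 with h | h
    · simp [h, hψ0]
    · exact (hψpos t x h).le
  set S : Finset (Fin T) := Finset.univ.filter (fun t => Y t ≠ (M t).mulVec z0) with hS
  have hScard : S.card ≤ r := by
    have hcoe : (↑S : Set (Fin T)) = {t | Y t ≠ (M t).mulVec z0} := by
      ext t; simp [hS]
    rw [← Set.ncard_coe_finset, hcoe]; exact hY
  obtain ⟨J, hSJ, hJcard⟩ := Finset.exists_superset_card_eq hScard (by simpa using hrT)
  have hkey : ∑ t ∈ S, ψ t ((M t).mulVec e) < (1 / 2) * ∑ t, ψ t ((M t).mulVec e) := by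
    calc ∑ t ∈ S, ψ t ((M t).mulVec e) ≤ ∑ t ∈ J, ψ t ((M t).mulVec e) :=
          Finset.sum_le_sum_of_subset_of_nonneg hSJ (fun t _ _ => hψnn t _)
      _ < _ := hnu e he0 J hJcard
  have hpt : ∀ t, ψ t (Y t - (M t).mulVec z0) + (ψ t ((M t).mulVec e)
      - 2 * (if t ∈ S then ψ t ((M t).mulVec e) else 0)) ≤ ψ t (Y t - (M t).mulVec z) := by
    intro t
    have hmv : (M t).mulVec e = (M t).mulVec z - (M t).mulVec z0 := by
      rw [he, Matrix.mulVec_sub]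
    by_cases ht : t ∈ S
    · simp only [ht, if_true]
      have h1 : Y t - (M t).mulVec z = (Y t - (M t).mulVec z0) - (M t).mulVec e := by
        rw [hmv]; abel
      have := hψGTI t (Y t - (M t).mulVec z0) ((M t).mulVec e)
      rw [h1]
      linarith
    · have hYt : Y t = (M t).mulVec z0 := by
        by_contra h; exact ht (by simp [hS, h])
      simp only [ht, if_false]
      have h1 : Y t - (M t).mulVec z = -((M t).mulVec e) := by
        rw [hYt, hmv]; abel
      rw [h1, hψsym, hYt, sub_self, hψ0]
      linarith
  have hsum := Finset.sum_le_sum (fun t (_ : t ∈ Finset.univ) => hpt t)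
  rw [Finset.sum_add_distrib, Finset.sum_sub_distrib, ← Finset.mul_sum] at hsum
  have hif : ∑ t, (if t ∈ S then ψ t ((M t).mulVec e) else 0)
      = ∑ t ∈ S, ψ t ((M t).mulVec e) := by
    rw [Finset.sum_ite_mem, Finset.univ_inter]
  rw [hif] at hsum
  linarith
end

section
/- Let $\{M_t\}_{t=0}^{T-1}$ be matrices in $\mathbb{R}^{n_y \times n}$ and define $\mu(M)$ as the minimum integer $k$ such that for every subset $I \subset \{0,\dots,T-1\}$ with $|I| = k$, the stacked matrix $M_I$ formed from $\{M_t : t \in I\}$ has full column rank $n$. Let $\psi_t(e) = 1$ if $e \neq 0$ and $0$ otherwise (block $\ell_0$ loss). Then for every nonzero $z \in \mathbb{R}^n$, $\sum_{t=0}^{T-1} \psi_t(M_t z) \geq T - \mu(M) + 1$, and consequently the concentration ratio satisfies $\nu_r(M) \leq \frac{r}{T - \mu(M) + 1}$. -/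
theorem l0_concentration_bound (T n ny : ℕ)
    (M : Fin T → Matrix (Fin ny) (Fin n) ℝ)
    (k : ℕ) (hk1 : 1 ≤ k) (hkT : k ≤ T)
    (hk : ∀ I : Finset (Fin T), I.card = k →
      ∀ z : Fin n → ℝ, (∀ t ∈ I, (M t).mulVec z = 0) → z = 0)
    (hkmin : ∀ k' < k, ¬ (∀ I : Finset (Fin T), I.card = k' →
      ∀ z : Fin n → ℝ, (∀ t ∈ I, (M t).mulVec z = 0) → z = 0))
    (ψ : Fin T → (Fin ny → ℝ) → ℝ)
    (hψ : ∀ t e, ψ t e = if e = 0 then 0 else 1) :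
    (∀ z : Fin n → ℝ, z ≠ 0 → (T : ℝ) - k + 1 ≤ ∑ t, ψ t ((M t).mulVec z)) ∧
      (∀ (r : ℕ) (z : Fin n → ℝ), z ≠ 0 → ∀ I : Finset (Fin T), I.card = r →
        (∑ t ∈ I, ψ t ((M t).mulVec z)) / (∑ t, ψ t ((M t).mulVec z)) ≤
          (r : ℝ) / ((T : ℝ) - k + 1)) := by
  classical
  have hpos : (0:ℝ) < (T : ℝ) - k + 1 := by
    have : (k:ℝ) ≤ T := by exact_mod_cast hkT
    linarith
  have key : ∀ z : Fin n → ℝ, z ≠ 0 →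
      (T : ℝ) - k + 1 ≤ ∑ t, ψ t ((M t).mulVec z) := by
    intro z hz
    set S := Finset.univ.filter (fun t => (M t).mulVec z = 0) with hS
    have hScard : S.card ≤ k - 1 := by
      by_contra h
      push_neg at h
      have hk' : k ≤ S.card := by omega
      obtain ⟨I, hIS, hIcard⟩ := Finset.exists_subset_card_eq hk'
      exact hz (hk I hIcard z (fun t ht => by
        have := hIS ht
        simpa [hS] using this))
    have hsum : ∑ t, ψ t ((M t).mulVec z)
        = ((Finset.univ.filter (fun t => ¬ (M t).mulVec z = 0)).card : ℝ) := by
      rw [← Finset.sum_boole]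
      apply Finset.sum_congr rfl
      intro t _
      rw [hψ]
      by_cases h : (M t).mulVec z = 0 <;> simp [h]
    rw [hsum]
    have hcomp : (Finset.univ.filter (fun t => ¬ (M t).mulVec z = 0)).card
        = T - S.card := by
      have := Finset.card_filter_add_card_filter_not
        (s := (Finset.univ : Finset (Fin T))) (p := fun t => (M t).mulVec z = 0)
      simp only [Finset.card_univ, Fintype.card_fin] at this
      have hSd : S.card = (Finset.univ.filter (fun t => (M t).mulVec z = 0)).card := rfl
      omega
    rw [hcomp]
    have : T - k + 1 ≤ T - S.card := by omega
    have hcast : ((T - S.card : ℕ) : ℝ) ≥ ((T - k + 1 : ℕ) : ℝ) := by exact_mod_cast this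
    have h1 : ((T - k + 1 : ℕ) : ℝ) = (T : ℝ) - k + 1 := by
      push_cast [Nat.sub_add_cancel, hkT]
      norm_cast
    linarith
  refine ⟨key, ?_⟩
  intro r z hz I hI
  have hnum_le : ∑ t ∈ I, ψ t ((M t).mulVec z) ≤ (r : ℝ) := by
    calc ∑ t ∈ I, ψ t ((M t).mulVec z) ≤ ∑ _t ∈ I, (1:ℝ) := by
          apply Finset.sum_le_sum
          intro t _
          rw [hψ]
          split <;> norm_num
      _ = (r : ℝ) := by simp [hI]
  have hnum_nonneg : 0 ≤ ∑ t ∈ I, ψ t ((M t).mulVec z) := by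
    apply Finset.sum_nonneg
    intro t _
    rw [hψ]
    split <;> norm_num
  exact div_le_div₀ (by positivity) hnum_le hpos (key z hz)
end

section
/- Observability implies a lower bound on the performance functional: consider an LTV system with matrices $\{A_t\}, \{C_t\}$, loss functions $\phi_t, \psi_t$ that are continuous, positive definite, symmetric and generalized homogeneous with $\mathcal{K}_\infty$ gauges, and the functional $V_\Sigma(0, Z) = \lambda \sum_{t=0}^{T-2} \phi_t(z_{t+1} - A_t z_t) + \sum_{t=0}^{T-1} \psi_t(C_t z_t)$ for $Z = (z_0, \dots, z_{T-1})$ with $\lambda > 0$. If the observability matrix $\mathcal{O}_{0,T-1}$ (the vertical stacking of $C_0$, $C_1 A_0$, ..., $C_{T-1} A_{T-2} \cdots A_0$) has full column rank $n$, then there exists a $\mathcal{K}_\infty$ function $q$ such that $V_\Sigma(0, Z) \geq q(\|z_0\|)$ for all $Z \in \mathbb{R}^{n \times T}$. -/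
def prodA (n : ℕ) (A : ℕ → Matrix (Fin n) (Fin n) ℝ) : ℕ → Matrix (Fin n) (Fin n) ℝ
  | 0 => 1
  | t + 1 => A t * prodA n A t

lemma isKInf_id' : IsKInf (fun r => r) :=
  ⟨continuousOn_id, rfl, fun _ _ _ _ h => h, Filter.tendsto_id⟩

lemma IsKInf.nonneg {f : ℝ → ℝ} (hf : IsKInf f) {r : ℝ} (hr : 0 ≤ r) : 0 ≤ f r := by
  obtain ⟨_, h0, hm, _⟩ := hf
  rcases hr.eq_or_lt with h | h
  · rw [← h, h0]
  · rw [← h0]; exact (hm (le_refl (0:ℝ)) h.le h).le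

lemma IsKInf.minK {f g : ℝ → ℝ} (hf : IsKInf f) (hg : IsKInf g) :
    IsKInf (fun r => min (f r) (g r)) := by
  obtain ⟨hfc, hf0, hfm, hft⟩ := hf
  obtain ⟨hgc, hg0, hgm, hgt⟩ := hg
  refine ⟨hfc.inf hgc, by simp [hf0, hg0], ?_, ?_⟩
  · intro a ha b hb hab
    exact lt_min ((min_le_left _ _).trans_lt (hfm ha hb hab))
      ((min_le_right _ _).trans_lt (hgm ha hb hab))
  · rw [Filter.tendsto_atTop] at *
    intro b
    filter_upwards [hft b, hgt b] with x h1 h2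
    exact le_min h1 h2

lemma IsKInf.constMul {f : ℝ → ℝ} (hf : IsKInf f) {m : ℝ} (hm : 0 < m) :
    IsKInf (fun r => m * f r) := by
  obtain ⟨hfc, hf0, hfm, hft⟩ := hf
  refine ⟨continuousOn_const.mul hfc, by simp [hf0], ?_, ?_⟩
  · intro a ha b hb hab
    exact mul_lt_mul_of_pos_left (hfm ha hb hab) hm
  · exact hft.const_mul_atTop hm

theorem observability_implies_lower_bound (n ny T : ℕ) (hT : 0 < T)
    (A : ℕ → Matrix (Fin n) (Fin n) ℝ) (C : ℕ → Matrix (Fin ny) (Fin n) ℝ)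
    (lam : ℝ) (hlam : 0 < lam)
    (φ : ℕ → (Fin n → ℝ) → ℝ) (ψ : ℕ → (Fin ny → ℝ) → ℝ)
    (hφcont : ∀ t, Continuous (φ t)) (hφ0 : ∀ t, φ t 0 = 0)
    (hφpos : ∀ t z, z ≠ 0 → 0 < φ t z) (hφsym : ∀ t z, φ t (-z) = φ t z)
    (hφGH : ∀ t, ∃ qt : ℝ → ℝ, IsKInf qt ∧
      ∀ c : ℝ, c ≠ 0 → ∀ z, φ t z ≥ qt (1 / |c|) * φ t (c • z))
    (hψcont : ∀ t, Continuous (ψ t)) (hψ0 : ∀ t, ψ t 0 = 0)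
    (hψpos : ∀ t e, e ≠ 0 → 0 < ψ t e) (hψsym : ∀ t e, ψ t (-e) = ψ t e)
    (hψGH : ∀ t, ∃ qt : ℝ → ℝ, IsKInf qt ∧
      ∀ c : ℝ, c ≠ 0 → ∀ e, ψ t e ≥ qt (1 / |c|) * ψ t (c • e))
    (hobs : ∀ z : Fin n → ℝ, (∀ t < T, (C t * prodA n A t).mulVec z = 0) → z = 0) :
    ∃ q : ℝ → ℝ, IsKInf q ∧ ∀ Z : ℕ → Fin n → ℝ,
      lam * ∑ t ∈ Finset.range (T - 1), φ t (Z (t + 1) - (A t).mulVec (Z t)) +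
          ∑ t ∈ Finset.range T, ψ t ((C t).mulVec (Z t)) ≥ q ‖Z 0‖ := by
  classical
  choose qφ hqφK hqφ using hφGH
  choose qψ hqψK hqψ using hψGH
  have hφnn : ∀ t z, 0 ≤ φ t z := by
    intro t z
    rcases eq_or_ne z 0 with h | h
    · simp [h, hφ0]
    · exact (hφpos t z h).le
  have hψnn : ∀ t e, 0 ≤ ψ t e := by
    intro t e
    rcases eq_or_ne e 0 with h | h
    · simp [h, hψ0]
    · exact (hψpos t e h).le
  set F : (ℕ → Fin n → ℝ) → ℝ := fun Z =>
    lam * ∑ t ∈ Finset.range (T - 1), φ t (Z (t + 1) - (A t).mulVec (Z t)) +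
      ∑ t ∈ Finset.range T, ψ t ((C t).mulVec (Z t)) with hFdef
  have hFnn : ∀ Z, 0 ≤ F Z := fun Z =>
    add_nonneg (mul_nonneg hlam.le (Finset.sum_nonneg fun t _ => hφnn t _))
      (Finset.sum_nonneg fun t _ => hψnn t _)
  rcases Nat.eq_zero_or_pos n with hn | hn
  · -- trivial case n = 0
    subst hn
    refine ⟨fun r => r, isKInf_id', fun Z => ?_⟩
    have hz : Z 0 = 0 := funext fun i => i.elim0
    have hz0 : ‖Z 0‖ = 0 := by rw [hz, norm_zero]
    show F Z ≥ ‖Z 0‖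
    rw [hz0]
    exact hFnn Z
  -- main case n ≥ 1
  haveI : Nonempty (Fin n) := ⟨⟨0, hn⟩⟩
  -- gauge Q: min of all gauges up to T
  set Qf : ℕ → ℝ → ℝ := fun k =>
    Nat.rec (fun r => r) (fun t Qt r => min (Qt r) (min (qφ t r) (qψ t r))) k with hQfdef
  have hQfK : ∀ k, IsKInf (Qf k) := by
    intro k
    induction k with
    | zero => exact isKInf_id'
    | succ t ih => exact ih.minK ((hqφK t).minK (hqψK t))
  have hQfle : ∀ k r t, t < k → Qf k r ≤ qφ t r ∧ Qf k r ≤ qψ t r := by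
    intro k
    induction k with
    | zero => intro r t ht; omega
    | succ s ih =>
      intro r t ht
      rcases Nat.lt_succ_iff_lt_or_eq.1 ht with h | h
      · have h1 : Qf (s+1) r ≤ Qf s r := min_le_left _ _
        exact ⟨h1.trans (ih r t h).1, h1.trans (ih r t h).2⟩
      · subst h
        exact ⟨(min_le_right _ _).trans (min_le_left _ _),
          (min_le_right _ _).trans (min_le_right _ _)⟩
  set Q : ℝ → ℝ := Qf T with hQdef
  have hQK : IsKInf Q := hQfK T
  have hQ0 : Q 0 = 0 := hQK.2.1
  -- sphere nonempty and positive minima of φ on the sphere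
  have hsph : ∃ u : Fin n → ℝ, ‖u‖ = 1 := by
    obtain ⟨u, hu⟩ := NormedSpace.sphere_nonempty (E := Fin n → ℝ) (x := 0) (r := 1) |>.2 zero_le_one
    exact ⟨u, by simpa using mem_sphere_zero_iff_norm.1 hu⟩
  have hmφ : ∀ t, ∃ m : ℝ, 0 < m ∧ ∀ u : Fin n → ℝ, ‖u‖ = 1 → m ≤ φ t u := by
    intro t
    obtain ⟨u0, hu0⟩ := hsph
    have hcs : IsCompact (Metric.sphere (0 : Fin n → ℝ) 1) := isCompact_sphere 0 1
    obtain ⟨u, hu, hmin⟩ := hcs.exists_isMinOn ⟨u0, by simpa [mem_sphere_zero_iff_norm] using hu0⟩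
      (hφcont t).continuousOn
    have hune : u ≠ 0 := by
      have h1 : ‖u‖ = 1 := mem_sphere_zero_iff_norm.1 hu
      intro h; rw [h, norm_zero] at h1; norm_num at h1
    exact ⟨φ t u, hφpos t u hune, fun v hv =>
      isMinOn_iff.1 hmin v (by simpa [mem_sphere_zero_iff_norm] using hv)⟩
  choose mφ hmφpos hmφle using hmφ
  -- coercivity of φ
  have hcoer : ∀ t, ∀ z : Fin n → ℝ, z ≠ 0 → mφ t * qφ t ‖z‖ ≤ φ t z := by
    intro t z hz
    have hnz : (0:ℝ) < ‖z‖ := norm_pos_iff.2 hz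
    have h := hqφ t (‖z‖⁻¹) (by positivity) z
    have habs : |‖z‖⁻¹| = ‖z‖⁻¹ := abs_of_pos (by positivity)
    rw [habs, one_div, inv_inv] at h
    have hu : ‖(‖z‖⁻¹ • z)‖ = 1 := by
      rw [norm_smul, Real.norm_eq_abs, habs]
      field_simp
    have h2 : mφ t ≤ φ t (‖z‖⁻¹ • z) := hmφle t _ hu
    have hq0 : 0 ≤ qφ t ‖z‖ := (hqφK t).nonneg hnz.le
    calc mφ t * qφ t ‖z‖ = qφ t ‖z‖ * mφ t := mul_comm _ _
      _ ≤ qφ t ‖z‖ * φ t (‖z‖⁻¹ • z) := mul_le_mul_of_nonneg_left h2 hq0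
      _ ≤ φ t z := h
  -- radii bounding the increments
  have hR : ∀ t, ∃ R : ℝ, 0 ≤ R ∧ ∀ z : Fin n → ℝ, φ t z ≤ 1 / lam → ‖z‖ ≤ R := by
    intro t
    obtain ⟨x0, hx0⟩ := Filter.eventually_atTop.1
      (Filter.tendsto_atTop.1 (hqφK t).2.2.2 (1 / (lam * mφ t) + 1))
    refine ⟨max x0 0, le_max_right _ _, fun z hz => ?_⟩
    by_contra hcon
    push_neg at hcon
    have hzne : z ≠ 0 := by
      intro h; rw [h, norm_zero] at hcon
      exact absurd hcon (not_lt.2 (le_max_right _ _))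
    have h1 : 1 / (lam * mφ t) + 1 ≤ qφ t ‖z‖ := hx0 _ ((le_max_left _ _).trans hcon.le)
    have h2 := hcoer t z hzne
    have h3 : mφ t * (1 / (lam * mφ t) + 1) ≤ φ t z :=
      le_trans (mul_le_mul_of_nonneg_left h1 (hmφpos t).le) h2
    have hmne : mφ t ≠ 0 := (hmφpos t).ne'
    have hlne : lam ≠ 0 := hlam.ne'
    have heq : mφ t * (1 / (lam * mφ t) + 1) = 1 / lam + mφ t := by
      field_simp
    rw [heq] at h3
    have := h3.trans hz
    linarith [hmφpos t]
  choose R hRnn hRle using hR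
  -- operator norms
  let L : ℕ → (Fin n → ℝ) →L[ℝ] (Fin n → ℝ) :=
    fun t => LinearMap.toContinuousLinearMap ((A t).mulVecLin)
  have hLapp : ∀ t v, (A t).mulVec v = L t v := fun t v => rfl
  let LC : ℕ → (Fin n → ℝ) →L[ℝ] (Fin ny → ℝ) :=
    fun t => LinearMap.toContinuousLinearMap ((C t).mulVecLin)
  have hLCapp : ∀ t v, (C t).mulVec v = LC t v := fun t v => rfl
  -- recursive bound B
  let B : ℕ → ℝ := fun k => Nat.rec (1:ℝ) (fun t Bt => ‖L t‖ * Bt + R t) k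
  have hBnn : ∀ k, 0 ≤ B k := by
    intro k
    induction k with
    | zero => exact zero_le_one
    | succ t ih => exact add_nonneg (mul_nonneg (norm_nonneg _) ih) (hRnn t)
  -- trajectory bound
  have hbound : ∀ Z : ℕ → Fin n → ℝ, ‖Z 0‖ = 1 → F Z ≤ 1 → ∀ t, t < T → ‖Z t‖ ≤ B t := by
    intro Z hZ0 hFZ t
    induction t with
    | zero => intro _; rw [hZ0]; exact le_refl (B 0)
    | succ t ih =>
      intro ht
      have htT : t < T := Nat.lt_of_succ_lt ht
      have ht1 : t ∈ Finset.range (T-1) := Finset.mem_range.2 (by omega)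
      have hterm : φ t (Z (t+1) - (A t).mulVec (Z t)) ≤ 1 / lam := by
        have hsum : φ t (Z (t+1) - (A t).mulVec (Z t)) ≤
            ∑ s ∈ Finset.range (T-1), φ s (Z (s+1) - (A s).mulVec (Z s)) :=
          Finset.single_le_sum (f := fun s => φ s (Z (s+1) - (A s).mulVec (Z s)))
            (fun s _ => hφnn s _) ht1
        have hψs : (0:ℝ) ≤ ∑ s ∈ Finset.range T, ψ s ((C s).mulVec (Z s)) :=
          Finset.sum_nonneg fun s _ => hψnn s _
        have h1 : lam * φ t (Z (t+1) - (A t).mulVec (Z t)) ≤ 1 := by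
          calc lam * φ t (Z (t+1) - (A t).mulVec (Z t))
              ≤ lam * ∑ s ∈ Finset.range (T-1), φ s (Z (s+1) - (A s).mulVec (Z s)) :=
                mul_le_mul_of_nonneg_left hsum hlam.le
            _ ≤ F Z := le_add_of_nonneg_right hψs
            _ ≤ 1 := hFZ
        rw [le_div_iff₀ hlam]
        linarith
      have hinc : ‖Z (t+1) - (A t).mulVec (Z t)‖ ≤ R t := hRle t _ hterm
      have htri : ‖Z (t+1)‖ ≤ ‖Z (t+1) - (A t).mulVec (Z t)‖ + ‖(A t).mulVec (Z t)‖ := by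
        simpa using norm_add_le (Z (t+1) - (A t).mulVec (Z t)) ((A t).mulVec (Z t))
      have hAv : ‖(A t).mulVec (Z t)‖ ≤ ‖L t‖ * ‖Z t‖ := by
        rw [hLapp]; exact (L t).le_opNorm _
      have hZt := ih htT
      have hmul : ‖L t‖ * ‖Z t‖ ≤ ‖L t‖ * B t :=
        mul_le_mul_of_nonneg_left hZt (norm_nonneg _)
      have : ‖Z (t+1)‖ ≤ ‖L t‖ * B t + R t := by linarith
      exact this
  -- compact set and minimum
  let K : Set (ℕ → Fin n → ℝ) := Set.pi Set.univ (fun t => Metric.closedBall (0 : Fin n → ℝ) (B t))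
  have hKcomp : IsCompact K := isCompact_univ_pi fun t => isCompact_closedBall _ _
  let K' : Set (ℕ → Fin n → ℝ) := K ∩ {Z | ‖Z 0‖ = 1}
  have hK'comp : IsCompact K' :=
    hKcomp.inter_right (isClosed_eq ((continuous_apply 0).norm) continuous_const)
  obtain ⟨u0, hu0⟩ := hsph
  have hK'ne : K'.Nonempty := by
    refine ⟨fun t => if t = 0 then u0 else 0, fun t _ => ?_, ?_⟩
    · simp only [Metric.mem_closedBall, dist_zero_right]
      rcases eq_or_ne t 0 with h | h
      · subst h
        rw [if_pos rfl, hu0]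
        exact le_refl (B 0)
      · rw [if_neg h, norm_zero]
        exact hBnn t
    · show ‖(fun t => if t = 0 then u0 else 0) 0‖ = 1
      simp [hu0]
  have hFcont : Continuous F := by
    refine Continuous.add (continuous_const.mul ?_) ?_
    · refine continuous_finset_sum _ fun t _ => (hφcont t).comp ?_
      exact (continuous_apply (t+1)).sub ((L t).continuous.comp (continuous_apply t))
    · refine continuous_finset_sum _ fun t _ => (hψcont t).comp ?_
      exact (LC t).continuous.comp (continuous_apply t)
  obtain ⟨Zm, hZmK, hZmmin⟩ := hK'comp.exists_isMinOn hK'ne hFcont.continuousOn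
  have hZm0 : ‖Zm 0‖ = 1 := hZmK.2
  have hm1pos : 0 < F Zm := by
    rcases (hFnn Zm).lt_or_eq with h | h
    · exact h
    · exfalso
      have h0 : lam * ∑ t ∈ Finset.range (T - 1), φ t (Zm (t + 1) - (A t).mulVec (Zm t)) +
          ∑ t ∈ Finset.range T, ψ t ((C t).mulVec (Zm t)) = 0 := h.symm
      have hS1 : (0:ℝ) ≤ ∑ t ∈ Finset.range (T - 1), φ t (Zm (t + 1) - (A t).mulVec (Zm t)) :=
        Finset.sum_nonneg fun t _ => hφnn t _
      have hS2 : (0:ℝ) ≤ ∑ t ∈ Finset.range T, ψ t ((C t).mulVec (Zm t)) :=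
        Finset.sum_nonneg fun t _ => hψnn t _
      have hs1 : ∑ t ∈ Finset.range (T - 1), φ t (Zm (t + 1) - (A t).mulVec (Zm t)) = 0 := by
        nlinarith [mul_nonneg hlam.le hS1]
      have hs2 : ∑ t ∈ Finset.range T, ψ t ((C t).mulVec (Zm t)) = 0 := by
        nlinarith [mul_nonneg hlam.le hS1]
      have hφz : ∀ t ∈ Finset.range (T-1), φ t (Zm (t+1) - (A t).mulVec (Zm t)) = 0 :=
        (Finset.sum_eq_zero_iff_of_nonneg (fun t _ => hφnn t _)).1 hs1
      have hψz : ∀ t ∈ Finset.range T, ψ t ((C t).mulVec (Zm t)) = 0 :=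
        (Finset.sum_eq_zero_iff_of_nonneg (fun t _ => hψnn t _)).1 hs2
      have hstep : ∀ t, t < T - 1 → Zm (t+1) = (A t).mulVec (Zm t) := by
        intro t ht
        by_contra hne
        have hd : Zm (t+1) - (A t).mulVec (Zm t) ≠ 0 := sub_ne_zero.2 hne
        exact absurd (hφz t (Finset.mem_range.2 ht)) (hφpos t _ hd).ne'
      have htraj : ∀ t, t < T → Zm t = (prodA n A t).mulVec (Zm 0) := by
        intro t
        induction t with
        | zero => intro _; rw [show prodA n A 0 = 1 from rfl, Matrix.one_mulVec]
        | succ t ih =>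
          intro ht
          have h1 := ih (Nat.lt_of_succ_lt ht)
          rw [hstep t (by omega), h1, show prodA n A (t+1) = A t * prodA n A t from rfl,
            ← Matrix.mulVec_mulVec]
      have hobs0 : Zm 0 = 0 := by
        apply hobs
        intro t ht
        have h1 := hψz t (Finset.mem_range.2 ht)
        have h2 : (C t).mulVec (Zm t) = 0 := by
          by_contra hne
          exact absurd h1 (hψpos t _ hne).ne'
        rw [htraj t ht] at h2
        rw [← Matrix.mulVec_mulVec]
        exact h2
      rw [hobs0, norm_zero] at hZm0
      norm_num at hZm0
  set m : ℝ := min 1 (F Zm) with hmdef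
  have hmpos : 0 < m := lt_min one_pos hm1pos
  have hmle : ∀ Z : ℕ → Fin n → ℝ, ‖Z 0‖ = 1 → m ≤ F Z := by
    intro Z hZ0
    rcases le_or_gt 1 (F Z) with h | h
    · exact (min_le_left _ _).trans h
    · set Z' : ℕ → Fin n → ℝ := fun t => if t < T then Z t else 0 with hZ'def
      have hFeq : F Z' = F Z := by
        rw [hFdef]
        simp only
        congr 1
        · congr 1
          refine Finset.sum_congr rfl fun t ht => ?_
          have h1 : t < T - 1 := Finset.mem_range.1 ht
          rw [show Z' (t+1) = Z (t+1) from if_pos (by omega),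
            show Z' t = Z t from if_pos (by omega)]
        · refine Finset.sum_congr rfl fun t ht => ?_
          rw [show Z' t = Z t from if_pos (Finset.mem_range.1 ht)]
      have hZ'0 : ‖Z' 0‖ = 1 := by
        rw [show Z' 0 = Z 0 from if_pos hT]; exact hZ0
      have hZ'K : Z' ∈ K' := by
        refine ⟨fun t _ => ?_, hZ'0⟩
        simp only [Metric.mem_closedBall, dist_zero_right]
        by_cases ht : t < T
        · rw [show Z' t = Z t from if_pos ht]
          exact hbound Z hZ0 h.le t ht
        · rw [show Z' t = (0:Fin n → ℝ) from if_neg ht, norm_zero]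
          exact hBnn t
      calc m ≤ F Zm := min_le_right _ _
        _ ≤ F Z' := isMinOn_iff.1 hZmmin Z' hZ'K
        _ = F Z := hFeq
  -- conclusion
  refine ⟨fun r => m * Q r, hQK.constMul hmpos, fun Z => ?_⟩
  show F Z ≥ m * Q ‖Z 0‖
  rcases eq_or_ne (Z 0) 0 with h0 | h0
  · rw [h0, norm_zero, hQ0, mul_zero]
    exact hFnn Z
  · have hr : 0 < ‖Z 0‖ := norm_pos_iff.2 h0
    set c : ℝ := ‖Z 0‖⁻¹ with hcdef
    have hc : 0 < c := by positivity
    set Z1 : ℕ → Fin n → ℝ := fun t => c • Z t with hZ1def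
    have habs : 1 / |c| = ‖Z 0‖ := by
      rw [abs_of_pos hc, hcdef, one_div, inv_inv]
    have hZ10 : ‖Z1 0‖ = 1 := by
      show ‖c • Z 0‖ = 1
      rw [norm_smul, Real.norm_eq_abs, abs_of_pos hc, hcdef]
      field_simp
    have hφi : ∀ t ∈ Finset.range (T-1),
        Q ‖Z 0‖ * φ t (Z1 (t+1) - (A t).mulVec (Z1 t)) ≤ φ t (Z (t+1) - (A t).mulVec (Z t)) := by
      intro t htmem
      have ht : t < T - 1 := Finset.mem_range.1 htmem
      have h := hqφ t c hc.ne' (Z (t+1) - (A t).mulVec (Z t))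
      rw [habs] at h
      have harg : c • (Z (t+1) - (A t).mulVec (Z t)) = Z1 (t+1) - (A t).mulVec (Z1 t) := by
        show c • (Z (t+1) - (A t).mulVec (Z t)) = c • Z (t+1) - (A t).mulVec (c • Z t)
        rw [smul_sub, Matrix.mulVec_smul]
      rw [harg] at h
      exact le_trans (mul_le_mul_of_nonneg_right (hQfle T ‖Z 0‖ t (by omega)).1 (hφnn t _)) h
    have hψi : ∀ t ∈ Finset.range T,
        Q ‖Z 0‖ * ψ t ((C t).mulVec (Z1 t)) ≤ ψ t ((C t).mulVec (Z t)) := by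
      intro t htmem
      have ht : t < T := Finset.mem_range.1 htmem
      have h := hqψ t c hc.ne' ((C t).mulVec (Z t))
      rw [habs] at h
      have harg : c • ((C t).mulVec (Z t)) = (C t).mulVec (Z1 t) := by
        show c • ((C t).mulVec (Z t)) = (C t).mulVec (c • Z t)
        rw [Matrix.mulVec_smul]
      rw [harg] at h
      exact le_trans (mul_le_mul_of_nonneg_right (hQfle T ‖Z 0‖ t ht).2 (hψnn t _)) h
    have hQnn0 : 0 ≤ Q ‖Z 0‖ := hQK.nonneg (norm_nonneg _)
    have hsum1 : Q ‖Z 0‖ * ∑ t ∈ Finset.range (T-1), φ t (Z1 (t+1) - (A t).mulVec (Z1 t)) ≤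
        ∑ t ∈ Finset.range (T-1), φ t (Z (t+1) - (A t).mulVec (Z t)) := by
      rw [Finset.mul_sum]
      exact Finset.sum_le_sum hφi
    have hsum2 : Q ‖Z 0‖ * ∑ t ∈ Finset.range T, ψ t ((C t).mulVec (Z1 t)) ≤
        ∑ t ∈ Finset.range T, ψ t ((C t).mulVec (Z t)) := by
      rw [Finset.mul_sum]
      exact Finset.sum_le_sum hψi
    have key : Q ‖Z 0‖ * F Z1 ≤ F Z := by
      show Q ‖Z 0‖ * (lam * ∑ t ∈ Finset.range (T-1), φ t (Z1 (t+1) - (A t).mulVec (Z1 t)) +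
          ∑ t ∈ Finset.range T, ψ t ((C t).mulVec (Z1 t))) ≤ _
      calc Q ‖Z 0‖ * (lam * ∑ t ∈ Finset.range (T-1), φ t (Z1 (t+1) - (A t).mulVec (Z1 t)) +
              ∑ t ∈ Finset.range T, ψ t ((C t).mulVec (Z1 t)))
          = lam * (Q ‖Z 0‖ * ∑ t ∈ Finset.range (T-1), φ t (Z1 (t+1) - (A t).mulVec (Z1 t))) +
              Q ‖Z 0‖ * ∑ t ∈ Finset.range T, ψ t ((C t).mulVec (Z1 t)) := by ring
        _ ≤ lam * ∑ t ∈ Finset.range (T-1), φ t (Z (t+1) - (A t).mulVec (Z t)) +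
              ∑ t ∈ Finset.range T, ψ t ((C t).mulVec (Z t)) :=
            add_le_add (mul_le_mul_of_nonneg_left hsum1 hlam.le) hsum2
    have hFZ1 : m ≤ F Z1 := hmle Z1 hZ10
    calc m * Q ‖Z 0‖ = Q ‖Z 0‖ * m := mul_comm _ _
      _ ≤ Q ‖Z 0‖ * F Z1 := mul_le_mul_of_nonneg_left hFZ1 hQnn0
      _ ≤ F Z := key
end

section
/- Converse direction of the observability characterization: consider the functional $V_\Sigma(0, Z) = \lambda \sum_{t=0}^{T-2} \phi_t(z_{t+1} - A_t z_t) + \sum_{t=0}^{T-1} \psi_t(C_t z_t)$ with $\lambda > 0$ and nonnegative loss functions $\phi_t, \psi_t$ vanishing at zero. If there exists a $\mathcal{K}_\infty$ function $q$ such that $V_\Sigma(0, Z) \geq q(\|z_0\|)$ for all $Z = (z_0, \dots, z_{T-1}) \in \mathbb{R}^{n \times T}$, then the observability matrix $\mathcal{O}_{0,T-1}$ (vertical stacking of $C_0$, $C_1 A_0$, ..., $C_{T-1} A_{T-2} \cdots A_0$) has full column rank $n$. -/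
theorem lower_bound_implies_observability (n ny T : ℕ) (hT : 0 < T)
    (A : ℕ → Matrix (Fin n) (Fin n) ℝ) (C : ℕ → Matrix (Fin ny) (Fin n) ℝ)
    (lam : ℝ) (hlam : 0 < lam)
    (φ : ℕ → (Fin n → ℝ) → ℝ) (ψ : ℕ → (Fin ny → ℝ) → ℝ)
    (hφnn : ∀ t z, 0 ≤ φ t z) (hφ0 : ∀ t, φ t 0 = 0)
    (hψnn : ∀ t e, 0 ≤ ψ t e) (hψ0 : ∀ t, ψ t 0 = 0)
    (q : ℝ → ℝ) (hq : IsKInf q)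
    (hbound : ∀ Z : ℕ → Fin n → ℝ,
      lam * ∑ t ∈ Finset.range (T - 1), φ t (Z (t + 1) - (A t).mulVec (Z t)) +
          ∑ t ∈ Finset.range T, ψ t ((C t).mulVec (Z t)) ≥ q ‖Z 0‖) :
    ∀ z : Fin n → ℝ, (∀ t < T, (C t * prodA n A t).mulVec z = 0) → z = 0 := by
  intro z hz
  set Z : ℕ → Fin n → ℝ := fun t => (prodA n A t).mulVec z with hZ
  have h1 : ∀ t, Z (t + 1) - (A t).mulVec (Z t) = 0 := by
    intro t
    simp [hZ, prodA, Matrix.mulVec_mulVec, sub_self]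
  have h2 : ∀ t < T, (C t).mulVec (Z t) = 0 := by
    intro t ht
    have := hz t ht
    rwa [← Matrix.mulVec_mulVec] at this
  have hb := hbound Z
  have hsum1 : ∑ t ∈ Finset.range (T - 1), φ t (Z (t + 1) - (A t).mulVec (Z t)) = 0 := by
    apply Finset.sum_eq_zero
    intro t _
    rw [h1 t, hφ0]
  have hsum2 : ∑ t ∈ Finset.range T, ψ t ((C t).mulVec (Z t)) = 0 := by
    apply Finset.sum_eq_zero
    intro t ht
    rw [h2 t (Finset.mem_range.mp ht), hψ0]
  rw [hsum1, hsum2, mul_zero, add_zero] at hb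
  have hZ0 : Z 0 = z := by simp [hZ, prodA]
  rw [hZ0] at hb
  by_contra hzne
  have hpos : (0:ℝ) < ‖z‖ := norm_pos_iff.mpr hzne
  have := hq.2.2.1 (Set.self_mem_Ici) (Set.mem_Ici.mpr hpos.le) hpos
  rw [hq.2.1] at this
  linarith
end
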